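/- Let m ≥ 1 and let ρ : ℝ → Matrix (Fin m) (Fin m) ℝ be differentiable on a nonempty open interval J ⊆ ℝ, with ρ(r) invertible for every r ∈ J, and satisfying the Sachs equation ρ'(r) = −ρ(r)·ρ(r) for all r ∈ J. Then there exists a constant matrix b (m×m, real) such that ρ(r)⁻¹ = r·1 − b for all r ∈ J. -/

import Mathlib

open Matrix

section Aux

attribute [local instance] Matrix.linftyOpNormedRing Matrix.linftyOpNormedAlgebra

private lemma aux_hasDerivAt_matrix {m : ℕ} {f : ℝ → Matrix (Fin m) (Fin m) ℝ}
    {A : Matrix (Fin m) (Fin m) ℝ} {x : ℝ}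
    (h : ∀ i j, HasDerivAt (fun t => f t i j) (A i j) x) :
    HasDerivAt f A x := by
  have h1 : HasDerivAt (fun t => ∑ i, ∑ j, f t i j • single i j (1 : ℝ))
      (∑ i, ∑ j, A i j • single i j (1 : ℝ)) x := by
    refine HasDerivAt.fun_sum fun i _ => HasDerivAt.fun_sum fun j _ => ?_
    simpa [smul_smul] using (h i j).smul_const (single i j (1 : ℝ))
  have e1 : (fun t => ∑ i, ∑ j, f t i j • single i j (1 : ℝ)) = f := by
    funext t
    simp only [smul_single, smul_eq_mul, mul_one]
    exact (matrix_eq_sum_single (f t)).symm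
  have e2 : (∑ i, ∑ j, A i j • single i j (1 : ℝ)) = A := by
    simp only [smul_single, smul_eq_mul, mul_one]
    exact (matrix_eq_sum_single A).symm
  rwa [e1, e2] at h1

private lemma aux_const {m : ℕ}
    (ρ : ℝ → Matrix (Fin m) (Fin m) ℝ)
    (J : Set ℝ) (hJopen : IsOpen J) (hJconn : J.OrdConnected)
    (hinv : ∀ r ∈ J, IsUnit (ρ r))
    (hder : ∀ r ∈ J, ∀ i j, HasDerivAt (fun s => ρ s i j) ((-(ρ r * ρ r)) i j) r)
    {r r₀ : ℝ} (hr : r ∈ J) (hr₀ : r₀ ∈ J) :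
    (ρ r)⁻¹ - r • (1 : Matrix (Fin m) (Fin m) ℝ)
      = (ρ r₀)⁻¹ - r₀ • (1 : Matrix (Fin m) (Fin m) ℝ) := by
  set F : ℝ → Matrix (Fin m) (Fin m) ℝ :=
    fun s => Ring.inverse (ρ s) - s • (1 : Matrix (Fin m) (Fin m) ℝ) with hF
  have key : ∀ s ∈ J, HasDerivAt F 0 s := by
    intro s hs
    obtain ⟨u, hu⟩ := hinv s hs
    have h1 : HasDerivAt ρ (-(ρ s * ρ s)) s := aux_hasDerivAt_matrix (hder s hs)
    have h2 : HasFDerivAt Ring.inverse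
        (-(ContinuousLinearMap.mulLeftRight ℝ (Matrix (Fin m) (Fin m) ℝ) ↑u⁻¹ ↑u⁻¹)) (ρ s) := by
      rw [← hu]; exact hasFDerivAt_ringInverse u
    have h3 := h2.comp_hasDerivAt s h1
    have hval : (-(ContinuousLinearMap.mulLeftRight ℝ (Matrix (Fin m) (Fin m) ℝ) ↑u⁻¹ ↑u⁻¹))
        (-(ρ s * ρ s)) = (1 : Matrix (Fin m) (Fin m) ℝ) := by
      simp only [ContinuousLinearMap.neg_apply, ContinuousLinearMap.mulLeftRight_apply]
      rw [← hu]
      calc -((↑u⁻¹ : Matrix (Fin m) (Fin m) ℝ) * -(↑u * ↑u) * ↑u⁻¹)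
          = ((↑u⁻¹ : Matrix (Fin m) (Fin m) ℝ) * ↑u) * (↑u * ↑u⁻¹) := by
            noncomm_ring
        _ = 1 := by
            rw [← Units.val_mul u⁻¹ u, ← Units.val_mul u u⁻¹]
            simp
    rw [hval] at h3
    have h4 : HasDerivAt (fun t : ℝ => t • (1 : Matrix (Fin m) (Fin m) ℝ))
        (1 : Matrix (Fin m) (Fin m) ℝ) s := by
      have h4' := (hasDerivAt_id s).smul_const (1 : Matrix (Fin m) (Fin m) ℝ)
      simp at h4'
      exact h4'
    have h5 := h3.sub h4
    rw [sub_self] at h5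
    exact h5
  have hconv : Convex ℝ J := convex_iff_ordConnected.mpr hJconn
  have hdiff : DifferentiableOn ℝ F J := fun s hs =>
    ((key s hs).differentiableAt).differentiableWithinAt
  have hfd : ∀ s ∈ J, fderivWithin ℝ F J s = 0 := by
    intro s hs
    rw [fderivWithin_of_isOpen hJopen hs]
    have h0 : HasFDerivAt F (0 : ℝ →L[ℝ] Matrix (Fin m) (Fin m) ℝ) s := by
      have := (key s hs).hasFDerivAt
      convert this using 1
      ext t
      simp
      ext t
      simp
    exact h0.fderiv
  have := hconv.is_const_of_fderivWithin_eq_zero hdiff hfd hr hr₀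
  simp only [hF] at this
  rwa [Matrix.nonsing_inv_eq_ringInverse, Matrix.nonsing_inv_eq_ringInverse]

end Aux

/-- **Integrated Sachs equation.** If `ρ : ℝ → Matrix (Fin m) (Fin m) ℝ` is
differentiable (entrywise) on a nonempty open interval `J`, takes invertible values on `J`,
and satisfies the Sachs equation `ρ' = -ρ·ρ` there, then there is a constant matrix `b`
with `ρ(r)⁻¹ = r·1 - b` on `J`. -/
theorem integrated_sachs_equation
    (m : ℕ) (hm : 1 ≤ m)
    (ρ : ℝ → Matrix (Fin m) (Fin m) ℝ)
    (J : Set ℝ) (hJopen : IsOpen J) (hJconn : J.OrdConnected) (hJne : J.Nonempty)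
    (hinv : ∀ r ∈ J, IsUnit (ρ r))
    (hder : ∀ r ∈ J, ∀ i j, HasDerivAt (fun s => ρ s i j) ((-(ρ r * ρ r)) i j) r) :
    ∃ b : Matrix (Fin m) (Fin m) ℝ,
      ∀ r ∈ J, (ρ r)⁻¹ = r • (1 : Matrix (Fin m) (Fin m) ℝ) - b := by
  obtain ⟨r₀, hr₀⟩ := hJne
  refine ⟨r₀ • (1 : Matrix (Fin m) (Fin m) ℝ) - (ρ r₀)⁻¹, fun r hr => ?_⟩
  have h := aux_const ρ J hJopen hJconn hinv hder hr hr₀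
  have : (ρ r)⁻¹ = (ρ r₀)⁻¹ - r₀ • (1 : Matrix (Fin m) (Fin m) ℝ)
      + r • (1 : Matrix (Fin m) (Fin m) ℝ) := by
    rw [← h]; abel
  rw [this]; abel
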